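/- arXiv:2305.17327 — 2 statements merged into one kernel-verified Lean document; each statement's English description precedes it below -/
import Mathlib

section
/- Let Z be a finite set, σ : Z → ℝ≥0 a probability distribution on Z, q : Z → ℝ>0 a fully-supported probability distribution on Z, and for each z ∈ Z let V_z be a real-valued random variable. Let ζ ~ q be sampled independently of the V_z, and define Y = Σ_{z∈Z} σ(z)·[ (1{ζ=z}/q(z))·(V_z - b(z)) + b(z) ] where b : Z → ℝ. Then Var(Y) = Σ_{z∈Z} (σ(z)²/q(z))·Var(V_z) + Var_{z~q}[ (σ(z)/q(z))·(E[V_z] - b(z)) ]. -/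
open MeasureTheory ProbabilityTheory

theorem one_step_outcome_sampling_variance
    {Ω : Type*} [MeasurableSpace Ω] (μ : Measure Ω) [IsProbabilityMeasure μ]
    {Z : Type*} [Fintype Z] [DecidableEq Z] [MeasurableSpace Z]
    [MeasurableSingletonClass Z]
    (σ q : Z → ℝ) (b : Z → ℝ) (V : Z → Ω → ℝ) (ζ : Ω → Z)
    (hσ0 : ∀ z, 0 ≤ σ z) (hσ1 : ∑ z, σ z = 1)
    (hq0 : ∀ z, 0 < q z) (hq1 : ∑ z, q z = 1)
    (hζ : Measurable ζ)
    (hζlaw : ∀ z, μ {ω | ζ ω = z} = ENNReal.ofReal (q z))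
    (hindep : IndepFun ζ (fun ω => fun z => V z ω) μ)
    (hV2 : ∀ z, MemLp (V z) 2 μ) :
    variance (fun ω => ∑ z, σ z *
        ((if ζ ω = z then (1 : ℝ) else 0) / q z * (V z ω - b z) + b z)) μ =
      (∑ z, (σ z ^ 2 / q z) * variance (V z) μ) +
        ((∑ z, q z * ((σ z / q z) * ((∫ ω, V z ω ∂μ) - b z)) ^ 2) -
          (∑ z, q z * ((σ z / q z) * ((∫ ω, V z ω ∂μ) - b z))) ^ 2) := by
  classical
  set m : Z → ℝ := fun z => ∫ ω, V z ω ∂μ with hm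
  set s2 : Z → ℝ := fun z => ∫ ω, (V z ω) ^ 2 ∂μ with hs2
  set D : Z → Ω → ℝ := fun z ω => V z ω - b z with hD
  set ind : Z → Ω → ℝ := fun z ω => if ζ ω = z then (1 : ℝ) else 0 with hind
  set g : Ω → ℝ := fun ω => ∑ z, σ z / q z * (ind z ω * D z ω) with hg
  set c : ℝ := ∑ z, σ z * b z with hc
  have hDmem : ∀ z, MemLp (D z) 2 μ := fun z => (hV2 z).sub (memLp_const (b z))
  have hindm : ∀ z, Measurable (ind z) := by
    intro z
    exact Measurable.ite (hζ (measurableSet_singleton z)) measurable_const measurable_const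
  have hindbdd : ∀ z ω, ‖ind z ω‖ ≤ 1 := by
    intro z ω; simp only [hind]; split <;> simp
  -- integral of the indicator
  have hindint : ∀ z, ∫ ω, ind z ω ∂μ = q z := by
    intro z
    have h1 : (fun ω => ind z ω) = Set.indicator (ζ ⁻¹' {z}) (fun _ => (1:ℝ)) := by
      funext ω
      simp [hind, Set.indicator_apply, Set.mem_preimage]
    rw [h1, integral_indicator_const (1:ℝ) (hζ (measurableSet_singleton z))]
    have h2 : ζ ⁻¹' {z} = {ω | ζ ω = z} := rfl
    rw [h2, measureReal_def, hζlaw z]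
    simp [ENNReal.toReal_ofReal (hq0 z).le]
  -- independence of the indicator with functions of V z
  have hindepz : ∀ z (ψ : (Z → ℝ) → ℝ), Measurable ψ →
      IndepFun (ind z) (fun ω => ψ (fun z' => V z' ω)) μ := by
    intro z ψ hψ
    have hφ : Measurable (fun z' : Z => if z' = z then (1:ℝ) else 0) :=
      Measurable.ite (measurableSet_singleton z) measurable_const measurable_const
    exact hindep.comp hφ hψ
  have hDint : ∀ z, Integrable (D z) μ := fun z => (hDmem z).integrable one_le_two
  have hD2int : ∀ z, Integrable (fun ω => D z ω ^ 2) μ := by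
    intro z
    simpa [sq] using (hDmem z).integrable_sq
  -- E[D z] and E[(D z)^2]
  have hED : ∀ z, ∫ ω, D z ω ∂μ = m z - b z := by
    intro z
    rw [hD]
    rw [integral_sub ((hV2 z).integrable one_le_two) (integrable_const (b z))]
    simp [hm]
  have hED2 : ∀ z, ∫ ω, D z ω ^ 2 ∂μ = s2 z - 2 * b z * m z + b z ^ 2 := by
    intro z
    have h1 : ∀ ω, D z ω ^ 2 = V z ω ^ 2 - 2 * b z * V z ω + b z ^ 2 := by
      intro ω; simp only [hD]; ring
    simp only [h1]
    have hiV2 : Integrable (fun ω => V z ω ^ 2) μ := by simpa [sq] using (hV2 z).integrable_sq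
    have hiV : Integrable (fun ω => 2 * b z * V z ω) μ :=
      ((hV2 z).integrable one_le_two).const_mul (2 * b z)
    have hsub : Integrable (fun ω => V z ω ^ 2 - 2 * b z * V z ω) μ := hiV2.sub hiV
    rw [integral_add hsub (integrable_const _),
      integral_sub hiV2 hiV, integral_const_mul, integral_const]
    simp [hs2, hm]
  -- key product integrals
  have hI1 : ∀ z, ∫ ω, ind z ω * D z ω ∂μ = q z * (m z - b z) := by
    intro z
    have hψ : Measurable (fun f : Z → ℝ => f z - b z) :=
      (measurable_pi_apply z).sub measurable_const
    have h := (hindepz z _ hψ).integral_mul_eq_mul_integral (hindm z).aestronglyMeasurable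
      (hDmem z).aestronglyMeasurable
    have heq : ∫ ω, ind z ω * D z ω ∂μ = (∫ ω, ind z ω ∂μ) * ∫ ω, D z ω ∂μ := by
      simpa [Pi.mul_apply, hD] using h
    rw [heq, hindint z, hED z]
  have hI2 : ∀ z, ∫ ω, ind z ω * D z ω ^ 2 ∂μ = q z * (s2 z - 2 * b z * m z + b z ^ 2) := by
    intro z
    have hψ : Measurable (fun f : Z → ℝ => (f z - b z) ^ 2) :=
      ((measurable_pi_apply z).sub measurable_const).pow_const 2
    have hD2sm : AEStronglyMeasurable (fun ω => D z ω ^ 2) μ :=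
      ((hDmem z).aestronglyMeasurable).pow 2
    have h := (hindepz z _ hψ).integral_mul_eq_mul_integral (hindm z).aestronglyMeasurable hD2sm
    have heq : ∫ ω, ind z ω * D z ω ^ 2 ∂μ = (∫ ω, ind z ω ∂μ) * ∫ ω, D z ω ^ 2 ∂μ := by
      simpa [Pi.mul_apply, hD] using h
    rw [heq, hindint z, hED2 z]
  -- integrability of the terms of g
  have hterm_int : ∀ z, Integrable (fun ω => ind z ω * D z ω) μ := by
    intro z
    exact (hDint z).bdd_mul (hindm z).aestronglyMeasurable (c := 1) (ae_of_all _ (hindbdd z))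
  have hterm2_int : ∀ z, Integrable (fun ω => ind z ω * D z ω ^ 2) μ := by
    intro z
    exact (hD2int z).bdd_mul (hindm z).aestronglyMeasurable (c := 1) (ae_of_all _ (hindbdd z))
  -- g is in L²
  have hgmem : MemLp g 2 μ := by
    rw [hg]
    apply memLp_finset_sum Finset.univ
    intro z _
    have hsm : AEStronglyMeasurable (fun ω => σ z / q z * (ind z ω * D z ω)) μ :=
      (((hindm z).aestronglyMeasurable.mul (hDmem z).aestronglyMeasurable)).const_mul _
    refine MemLp.of_le ((hDmem z).const_mul (σ z / q z)) hsm ?_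
    filter_upwards with ω
    simp only [norm_mul]
    have : ‖ind z ω‖ * ‖D z ω‖ ≤ 1 * ‖D z ω‖ :=
      mul_le_mul_of_nonneg_right (hindbdd z ω) (norm_nonneg _)
    calc ‖σ z / q z‖ * (‖ind z ω‖ * ‖D z ω‖) ≤ ‖σ z / q z‖ * (1 * ‖D z ω‖) :=
          mul_le_mul_of_nonneg_left this (norm_nonneg _)
      _ = ‖σ z / q z‖ * ‖D z ω‖ := by ring
  -- pointwise: Y = g + c
  have hY : (fun ω => ∑ z, σ z *
      ((if ζ ω = z then (1 : ℝ) else 0) / q z * (V z ω - b z) + b z)) =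
      fun ω => g ω + c := by
    funext ω
    rw [hg, hc, ← Finset.sum_add_distrib]
    apply Finset.sum_congr rfl
    intro z _
    simp only [hind, hD]
    split <;> ring
  rw [hY]
  -- variance of g + c via variance_eq_sub
  have hgint : Integrable g μ := hgmem.integrable one_le_two
  have hYmem : MemLp (fun ω => g ω + c) 2 μ := hgmem.add (memLp_const c)
  have hvar : variance (fun ω => g ω + c) μ =
      (∫ ω, g ω ^ 2 ∂μ) - (∫ ω, g ω ∂μ) ^ 2 := by
    rw [variance_eq_sub hYmem]
    have h1 : ∫ ω, ((fun ω => g ω + c) ^ 2) ω ∂μ =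
        (∫ ω, g ω ^ 2 ∂μ) + (2 * c * ∫ ω, g ω ∂μ + c ^ 2) := by
      have : ∀ ω, ((fun ω => g ω + c) ^ 2) ω = g ω ^ 2 + (2 * c * g ω + c ^ 2) := by
        intro ω; simp [Pi.pow_apply]; ring
      have hig2 : Integrable (fun ω => g ω ^ 2) μ := by simpa [sq] using hgmem.integrable_sq
      have hicg : Integrable (fun ω => 2 * c * g ω) μ := hgint.const_mul (2 * c)
      have hadd : Integrable (fun ω => 2 * c * g ω + c ^ 2) μ := hicg.add (integrable_const _)
      rw [integral_congr_ae (Filter.Eventually.of_forall this),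
        integral_add hig2 hadd,
        integral_add hicg (integrable_const _),
        integral_const_mul, integral_const]
      simp
    have h2 : ∫ ω, g ω + c ∂μ = (∫ ω, g ω ∂μ) + c := by
      rw [integral_add hgint (integrable_const c), integral_const]; simp
    calc (∫ ω, ((fun ω => g ω + c) ^ 2) ω ∂μ) - (∫ ω, g ω + c ∂μ) ^ 2
        = ((∫ ω, g ω ^ 2 ∂μ) + (2 * c * ∫ ω, g ω ∂μ + c ^ 2)) -
          ((∫ ω, g ω ∂μ) + c) ^ 2 := by rw [h1, h2]
      _ = (∫ ω, g ω ^ 2 ∂μ) - (∫ ω, g ω ∂μ) ^ 2 := by ring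
  rw [hvar]
  -- compute ∫ g
  have hEg : ∫ ω, g ω ∂μ = ∑ z, σ z / q z * (q z * (m z - b z)) := by
    rw [hg, integral_finset_sum _ (fun z _ => (hterm_int z).const_mul _)]
    exact Finset.sum_congr rfl fun z _ => by rw [integral_const_mul, hI1 z]
  -- pointwise formula for g²
  have hg2 : ∀ ω, g ω ^ 2 = ∑ z, (σ z / q z) ^ 2 * (ind z ω * D z ω ^ 2) := by
    intro ω
    have collapse : ∀ F : Z → ℝ, (∑ z, if ζ ω = z then F z else 0) = F (ζ ω) := by
      intro F
      rw [Finset.sum_ite_eq]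
      simp
    have h1 : g ω = σ (ζ ω) / q (ζ ω) * D (ζ ω) ω := by
      simp only [hg]
      rw [show (∑ z, σ z / q z * (ind z ω * D z ω)) =
          ∑ z, if ζ ω = z then σ z / q z * D z ω else 0 from
        Finset.sum_congr rfl fun z _ => by simp only [hind]; split <;> ring]
      exact collapse fun z => σ z / q z * D z ω
    have h2 : (∑ z, (σ z / q z) ^ 2 * (ind z ω * D z ω ^ 2)) =
        (σ (ζ ω) / q (ζ ω)) ^ 2 * D (ζ ω) ω ^ 2 := by
      rw [show (∑ z, (σ z / q z) ^ 2 * (ind z ω * D z ω ^ 2)) =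
          ∑ z, if ζ ω = z then (σ z / q z) ^ 2 * D z ω ^ 2 else 0 from
        Finset.sum_congr rfl fun z _ => by simp only [hind]; split <;> ring]
      exact collapse fun z => (σ z / q z) ^ 2 * D z ω ^ 2
    rw [h1, h2]; ring
  have hEg2 : ∫ ω, g ω ^ 2 ∂μ =
      ∑ z, (σ z / q z) ^ 2 * (q z * (s2 z - 2 * b z * m z + b z ^ 2)) := by
    rw [integral_congr_ae (Filter.Eventually.of_forall hg2),
      integral_finset_sum _ (fun z _ => (hterm2_int z).const_mul _)]
    exact Finset.sum_congr rfl fun z _ => by rw [integral_const_mul, hI2 z]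
  rw [hEg, hEg2]
  -- variance of V z in terms of s2 and m
  have hvarV : ∀ z, variance (V z) μ = s2 z - m z ^ 2 := by
    intro z
    rw [variance_eq_sub (hV2 z)]
    simp [hs2, hm, Pi.pow_apply]
  simp only [hvarV]
  have e1 : ∀ z, (σ z / q z) ^ 2 * (q z * (s2 z - 2 * b z * m z + b z ^ 2)) =
      σ z ^ 2 / q z * (s2 z - m z ^ 2) + q z * (σ z / q z * (m z - b z)) ^ 2 := by
    intro z
    have hz := (hq0 z).ne'
    field_simp
    ring
  have e2 : ∀ z, σ z / q z * (q z * (m z - b z)) = q z * (σ z / q z * (m z - b z)) := by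
    intro z; ring
  simp only [e1, e2, Finset.sum_add_distrib]
  ring
end

section
/- (Regret matching bound.) Let A be a finite nonempty set, and let u^t : A → ℝ for t = 1,…,T be payoff functions with range bounded by Δ, i.e. max_{a,a'} (u^t(a) - u^t(a')) ≤ Δ for all t. Define strategies σ^t : A → [0,1] recursively by regret matching: σ^t(a) = R^{t-1,+}(a)/μ if μ = Σ_{a'} R^{t-1,+}(a') > 0 and σ^t(a) = 1/|A| otherwise, where R^t(a) = (1/t)·Σ_{s=1}^t [u^s(a) - Σ_{a'} σ^s(a')·u^s(a')] and R^{t,+} = max(R^t, 0). Then max_{a∈A} R^T(a) ≤ Δ·√|A| / √T. -/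
open Finset

private lemma sq_max_add (x y : ℝ) :
    (max (x + y) 0)^2 ≤ (max x 0)^2 + 2 * (max x 0) * y + y^2 := by
  have h : (max (x + y) 0)^2 ≤ (max x 0 + y)^2 := by
    rcases le_or_gt (x + y) 0 with h | h
    · rw [max_eq_right h]
      simpa using sq_nonneg (max x 0 + y)
    · rw [max_eq_left h.le]
      have h1 : x + y ≤ max x 0 + y := by have := le_max_left x 0; linarith
      have h2 : -(max x 0 + y) ≤ x + y := by
        have := le_max_left x 0; nlinarith
      exact sq_le_sq' h2 h1
  nlinarith [h]

private lemma blackwell {A : Type*} [Fintype A] [DecidableEq A]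
    (T : ℕ) (r : ℕ → A → ℝ) (Δ : ℝ)
    (hb : ∀ t ∈ Finset.Icc 1 T, ∀ a : A, (r t a)^2 ≤ Δ^2)
    (hc : ∀ t ∈ Finset.Icc 1 T,
      ∑ a, max (∑ s ∈ Finset.Icc 1 (t-1), r s a) 0 * r t a = 0) :
    ∑ a, (max (∑ s ∈ Finset.Icc 1 T, r s a) 0)^2 ≤ Δ^2 * Fintype.card A * T := by
  induction T with
  | zero => simp
  | succ n ih =>
    have hsub : Finset.Icc 1 n ⊆ Finset.Icc 1 (n+1) :=
      Finset.Icc_subset_Icc_right (Nat.le_succ n)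
    have ihn : ∑ a, (max (∑ s ∈ Finset.Icc 1 n, r s a) 0)^2 ≤ Δ^2 * Fintype.card A * n :=
      ih (fun t ht => hb t (hsub ht)) (fun t ht => hc t (hsub ht))
    have key : ∀ a : A, (max (∑ s ∈ Finset.Icc 1 (n+1), r s a) 0)^2 ≤
        (max (∑ s ∈ Finset.Icc 1 n, r s a) 0)^2
        + 2 * (max (∑ s ∈ Finset.Icc 1 n, r s a) 0) * r (n+1) a + (r (n+1) a)^2 := by
      intro a
      rw [Finset.sum_Icc_succ_top (Nat.succ_le_succ (Nat.zero_le n))]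
      exact sq_max_add _ _
    have hmem : (n+1) ∈ Finset.Icc 1 (n+1) := Finset.mem_Icc.mpr ⟨Nat.succ_le_succ (Nat.zero_le n), le_refl _⟩
    have hcross := hc (n+1) hmem
    simp only [Nat.add_sub_cancel] at hcross
    have hbsum : ∑ a : A, (r (n+1) a)^2 ≤ Δ^2 * Fintype.card A := by
      calc ∑ a : A, (r (n+1) a)^2 ≤ ∑ _a : A, Δ^2 :=
            Finset.sum_le_sum (fun a _ => hb (n+1) hmem a)
        _ = Δ^2 * Fintype.card A := by
            rw [Finset.sum_const, Finset.card_univ, nsmul_eq_mul, mul_comm]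
    have hsum : ∑ a, (max (∑ s ∈ Finset.Icc 1 (n+1), r s a) 0)^2 ≤
        (∑ a, (max (∑ s ∈ Finset.Icc 1 n, r s a) 0)^2)
        + 2 * (∑ a, max (∑ s ∈ Finset.Icc 1 n, r s a) 0 * r (n+1) a)
        + ∑ a, (r (n+1) a)^2 := by
      calc ∑ a, (max (∑ s ∈ Finset.Icc 1 (n+1), r s a) 0)^2
          ≤ ∑ a, ((max (∑ s ∈ Finset.Icc 1 n, r s a) 0)^2
            + 2 * (max (∑ s ∈ Finset.Icc 1 n, r s a) 0) * r (n+1) a + (r (n+1) a)^2) :=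
            Finset.sum_le_sum (fun a _ => key a)
        _ = _ := by
            rw [Finset.sum_add_distrib, Finset.sum_add_distrib, Finset.mul_sum]
            congr 1
            congr 1
            exact Finset.sum_congr rfl fun a _ => by ring
    rw [hcross] at hsum
    push_cast
    nlinarith [hsum, ihn, hbsum]

theorem regret_matching_bound
    {A : Type*} [Fintype A] [Nonempty A] [DecidableEq A]
    (T : ℕ) (hT : 1 ≤ T)
    (u : ℕ → A → ℝ) (σ : ℕ → A → ℝ) (R : ℕ → A → ℝ) (Δ : ℝ)
    (hΔ : ∀ t ∈ Finset.Icc 1 T, ∀ a a' : A, u t a - u t a' ≤ Δ)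
    (hR : ∀ t, ∀ a : A, R t a =
      (1 / (t : ℝ)) * ∑ s ∈ Finset.Icc 1 t, (u s a - ∑ a', σ s a' * u s a'))
    (hσ : ∀ t ∈ Finset.Icc 1 T, ∀ a : A,
      σ t a =
        if 0 < ∑ a', max (R (t - 1) a') 0 then
          max (R (t - 1) a) 0 / ∑ a', max (R (t - 1) a') 0
        else 1 / (Fintype.card A : ℝ)) :
    ∀ a : A, R T a ≤ Δ * Real.sqrt (Fintype.card A) / Real.sqrt T := by
  set r : ℕ → A → ℝ := fun t a => u t a - ∑ a', σ t a' * u t a' with hrdef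
  have hr : ∀ t a, r t a = u t a - ∑ a', σ t a' * u t a' := fun t a => rfl
  have hR' : ∀ t, ∀ a : A, R t a = (1 / (t : ℝ)) * ∑ s ∈ Finset.Icc 1 t, r s a := by
    intro t a
    rw [hR t a]
  have hTpos : (0:ℝ) < T := by exact_mod_cast Nat.lt_of_lt_of_le Nat.zero_lt_one hT
  have hcard : (0:ℝ) < Fintype.card A := by exact_mod_cast Fintype.card_pos
  have a0 : A := Classical.arbitrary A
  have hΔ0 : 0 ≤ Δ := by
    have := hΔ 1 (Finset.mem_Icc.mpr ⟨le_refl 1, hT⟩) a0 a0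
    linarith
  have hM0 : ∀ k : ℕ, ∀ a : A, 0 ≤ max (R k a) 0 := fun _ _ => le_max_right _ _
  have hσ0 : ∀ t ∈ Finset.Icc 1 T, ∀ a : A, 0 ≤ σ t a := by
    intro t ht a
    rw [hσ t ht a]
    split_ifs with h
    · exact div_nonneg (hM0 _ _) h.le
    · positivity
  have hσ1 : ∀ t ∈ Finset.Icc 1 T, ∑ a, σ t a = 1 := by
    intro t ht
    rcases lt_or_ge 0 (∑ a', max (R (t-1) a') 0) with h | h
    · rw [Finset.sum_congr rfl (fun a _ => by rw [hσ t ht a, if_pos h])]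
      rw [← Finset.sum_div, div_self (ne_of_gt h)]
    · rw [Finset.sum_congr rfl (fun a _ => by rw [hσ t ht a, if_neg (not_lt.mpr h)])]
      rw [Finset.sum_const, Finset.card_univ, nsmul_eq_mul, mul_one_div, div_self (ne_of_gt hcard)]
  have habs : ∀ t ∈ Finset.Icc 1 T, ∀ a : A, |r t a| ≤ Δ := by
    intro t ht a
    have h1 : r t a = ∑ a', σ t a' * (u t a - u t a') := by
      rw [hr]
      simp only [mul_sub]
      rw [Finset.sum_sub_distrib, ← Finset.sum_mul, hσ1 t ht, one_mul]
    rw [h1]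
    calc |∑ a', σ t a' * (u t a - u t a')| ≤ ∑ a', |σ t a' * (u t a - u t a')| :=
          Finset.abs_sum_le_sum_abs _ _
      _ ≤ ∑ a', σ t a' * Δ := by
          apply Finset.sum_le_sum
          intro a' _
          rw [abs_mul, abs_of_nonneg (hσ0 t ht a')]
          refine mul_le_mul_of_nonneg_left ?_ (hσ0 t ht a')
          rw [abs_le]
          exact ⟨by linarith [hΔ t ht a' a], hΔ t ht a a'⟩
      _ = Δ := by rw [← Finset.sum_mul, hσ1 t ht, one_mul]
  have hb : ∀ t ∈ Finset.Icc 1 T, ∀ a : A, (r t a)^2 ≤ Δ^2 := by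
    intro t ht a
    have h := abs_le.mp (habs t ht a)
    exact sq_le_sq' h.1 h.2
  have hSR : ∀ k : ℕ, ∀ a : A,
      max (∑ s ∈ Finset.Icc 1 k, r s a) 0 = (k:ℝ) * max (R k a) 0 := by
    intro k a
    rcases Nat.eq_zero_or_pos k with hk | hk
    · subst hk; simp
    · have hkpos : (0:ℝ) < k := by exact_mod_cast hk
      rw [hR' k a, mul_max_of_nonneg _ _ hkpos.le, mul_zero]
      congr 1
      rw [← mul_assoc, mul_one_div, div_self (ne_of_gt hkpos), one_mul]
  have hσr : ∀ t ∈ Finset.Icc 1 T, ∑ a, σ t a * r t a = 0 := by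
    intro t ht
    simp only [hr, mul_sub]
    rw [Finset.sum_sub_distrib, ← Finset.sum_mul, hσ1 t ht, one_mul, sub_self]
  have hc : ∀ t ∈ Finset.Icc 1 T,
      ∑ a, max (∑ s ∈ Finset.Icc 1 (t-1), r s a) 0 * r t a = 0 := by
    intro t ht
    have key : ∑ a, max (R (t-1) a) 0 * r t a = 0 := by
      rcases lt_or_ge 0 (∑ a', max (R (t-1) a') 0) with h | h
      · have hMu : ∀ a, max (R (t-1) a) 0 = σ t a * (∑ a', max (R (t-1) a') 0) := by
          intro a
          rw [hσ t ht a, if_pos h, div_mul_cancel₀ _ (ne_of_gt h)]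
        calc ∑ a, max (R (t-1) a) 0 * r t a
            = ∑ a, σ t a * (∑ a', max (R (t-1) a') 0) * r t a :=
              Finset.sum_congr rfl fun a _ => by rw [hMu a]
          _ = (∑ a', max (R (t-1) a') 0) * ∑ a, σ t a * r t a := by
              rw [Finset.mul_sum]
              exact Finset.sum_congr rfl fun a _ => by ring
          _ = 0 := by rw [hσr t ht, mul_zero]
      · have hz : ∀ a : A, max (R (t-1) a) 0 = 0 := by
          have h0 : ∑ a', max (R (t-1) a') 0 = 0 :=
            le_antisymm h (Finset.sum_nonneg fun a _ => hM0 _ a)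
          intro a
          exact (Finset.sum_eq_zero_iff_of_nonneg (fun a _ => hM0 _ a)).mp h0 a (Finset.mem_univ a)
        exact Finset.sum_eq_zero fun a _ => by rw [hz a, zero_mul]
    calc ∑ a, max (∑ s ∈ Finset.Icc 1 (t-1), r s a) 0 * r t a
        = ∑ a, ((t-1:ℕ):ℝ) * max (R (t-1) a) 0 * r t a :=
          Finset.sum_congr rfl fun a _ => by rw [hSR (t-1) a]
      _ = ((t-1:ℕ):ℝ) * ∑ a, max (R (t-1) a) 0 * r t a := by
          rw [Finset.mul_sum]
          exact Finset.sum_congr rfl fun a _ => by ring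
      _ = 0 := by rw [key, mul_zero]
  intro a
  have hsum := blackwell T r Δ hb hc
  have h1 : (max (∑ s ∈ Finset.Icc 1 T, r s a) 0)^2 ≤ Δ^2 * Fintype.card A * T :=
    le_trans (Finset.single_le_sum (f := fun a => (max (∑ s ∈ Finset.Icc 1 T, r s a) 0)^2)
      (fun a _ => sq_nonneg _) (Finset.mem_univ a)) hsum
  have hBound : max (∑ s ∈ Finset.Icc 1 T, r s a) 0
      ≤ Δ * Real.sqrt (Fintype.card A) * Real.sqrt T := by
    have e1 : max (∑ s ∈ Finset.Icc 1 T, r s a) 0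
        = Real.sqrt ((max (∑ s ∈ Finset.Icc 1 T, r s a) 0)^2) :=
      (Real.sqrt_sq (le_max_right _ _)).symm
    rw [e1]
    calc Real.sqrt ((max (∑ s ∈ Finset.Icc 1 T, r s a) 0)^2)
        ≤ Real.sqrt (Δ^2 * Fintype.card A * T) := Real.sqrt_le_sqrt h1
      _ = Δ * Real.sqrt (Fintype.card A) * Real.sqrt T := by
          rw [Real.sqrt_mul (by positivity), Real.sqrt_mul (sq_nonneg Δ), Real.sqrt_sq hΔ0]
  have hS : ∑ s ∈ Finset.Icc 1 T, r s a ≤ Δ * Real.sqrt (Fintype.card A) * Real.sqrt T :=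
    le_trans (le_max_left _ _) hBound
  have hsT : Real.sqrt T * Real.sqrt T = T := Real.mul_self_sqrt hTpos.le
  have hsTpos : 0 < Real.sqrt T := Real.sqrt_pos.mpr hTpos
  rw [hR' T a]
  have hfin : (1/(T:ℝ)) * (Δ * Real.sqrt (Fintype.card A) * Real.sqrt T)
      = Δ * Real.sqrt (Fintype.card A) / Real.sqrt T := by
    rw [← hsT]
    field_simp
    rw [Real.sqrt_sq hsTpos.le]; ring
  calc (1/(T:ℝ)) * ∑ s ∈ Finset.Icc 1 T, r s a
      ≤ (1/(T:ℝ)) * (Δ * Real.sqrt (Fintype.card A) * Real.sqrt T) :=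
        mul_le_mul_of_nonneg_left hS (by positivity)
    _ = _ := hfin
end
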